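/- If μ ≥ η̃ > 0 and ν > 9η̃μ/(4μ−η̃), then there exists q̃₀ ∈ (3/4, 1) such that for all q̃ ∈ (q̃₀, 1): B(v₋(q̃)) is negative definite, A(v₋(q̃)) is positive definite, and both eigenvalues of B(v₋(q̃))⁻¹·A(v₋(q̃)) are real and negative, i.e., the upstream state ψ₋(q̃) is an attractor of the profile ODE. (Lemma 2(i).) -/

import Mathlib

open Real Matrix Filter Topology Set

noncomputable section

/-- The state space condition `ψ⁰ > |ψ¹|`. -/
def StateSpace (ψ : Fin 2 → ℝ) : Prop := |ψ 1| < ψ 0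

/-- Temperature variable `θ(ψ) = ((ψ⁰)² − (ψ¹)²)^(−1/2)`. -/
def θf (ψ : Fin 2 → ℝ) : ℝ := (Real.sqrt ((ψ 0) ^ 2 - (ψ 1) ^ 2))⁻¹

/-- `u(ψ) = θ(ψ) ψ⁰`. -/
def uf (ψ : Fin 2 → ℝ) : ℝ := θf ψ * ψ 0

/-- `v(ψ) = θ(ψ) ψ¹`. -/
def vf (ψ : Fin 2 → ℝ) : ℝ := θf ψ * ψ 1

/-- Ideal stress component `T⁰¹`. -/
def T01 (ψ : Fin 2 → ℝ) : ℝ := (4 / 3) * (θf ψ) ^ 4 * uf ψ * vf ψ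

/-- Ideal stress component `T¹¹`. -/
def T11 (ψ : Fin 2 → ℝ) : ℝ := (θf ψ) ^ 4 * ((4 / 3) * (vf ψ) ^ 2 + 1 / 3)

/-- `u = √(1+v²)` as a function of the velocity `v`. -/
def uu (v : ℝ) : ℝ := Real.sqrt (1 + v ^ 2)

/-- Viscosity matrix `B̃_visc(v)`. -/
def Bvisc (v : ℝ) : Matrix (Fin 2) (Fin 2) ℝ :=
  !![(uu v) ^ 2 * v ^ 2, -((uu v) ^ 3 * v); -((uu v) ^ 3 * v), (uu v) ^ 4]

/-- Thermal regulator matrix `B_ther(v)`. -/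
def Bther (v : ℝ) : Matrix (Fin 2) (Fin 2) ℝ :=
  !![16 * (uu v) ^ 2 * v ^ 2, -(4 * uu v * v * (4 * v ^ 2 + 1));
     -(4 * uu v * v * (4 * v ^ 2 + 1)), (4 * v ^ 2 + 1) ^ 2]

/-- Velocity regulator matrix `B_velo(v)`. -/
def Bvelo (v : ℝ) : Matrix (Fin 2) (Fin 2) ℝ :=
  !![((uu v) ^ 2 + v ^ 2) ^ 2, -(2 * ((uu v) ^ 2 + v ^ 2) * uu v * v);
     -(2 * ((uu v) ^ 2 + v ^ 2) * uu v * v), 4 * (uu v) ^ 2 * v ^ 2]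

/-- The full dissipation matrix `B(v) = η̃ B̃_visc − μ B_ther − ν B_velo`. -/
def Bmat (η μ ν v : ℝ) : Matrix (Fin 2) (Fin 2) ℝ :=
  η • Bvisc v - μ • Bther v - ν • Bvelo v

/-- The (rescaled) flux Jacobian `A(v)`. -/
def Amat (v : ℝ) : Matrix (Fin 2) (Fin 2) ℝ :=
  !![v * (6 * (uu v) ^ 2 - 1), -(uu v * (6 * v ^ 2 + 1));
     -(uu v * (6 * v ^ 2 + 1)), v * (6 * v ^ 2 + 3)]

/-- Upstream velocity `v₋(q̃)`. -/
def vminus (q : ℝ) : ℝ :=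
  Real.sqrt (((2 * q - 1) + Real.sqrt (q * (4 * q - 3))) / (4 * (1 - q)))

/-- Downstream velocity `v₊(q̃)`. -/
def vplus (q : ℝ) : ℝ :=
  Real.sqrt (((2 * q - 1) - Real.sqrt (q * (4 * q - 3))) / (4 * (1 - q)))

/-- The state `ψ` with velocity `v` on the Hugoniot curve `T¹¹ = 1`. -/
def psiOf (v : ℝ) : Fin 2 → ℝ :=
  ((4 / 3) * v ^ 2 + 1 / 3) ^ ((1 : ℝ) / 4) • ![Real.sqrt (1 + v ^ 2), v]

/-- Upstream state `ψ₋(q̃)`. -/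
def psiMinus (q : ℝ) : Fin 2 → ℝ := psiOf (vminus q)

/-- Downstream state `ψ₊(q̃)`. -/
def psiPlus (q : ℝ) : Fin 2 → ℝ := psiOf (vplus q)

/-- `ψ : ℝ → Ψ` is a C¹ solution of the profile ODE
`B(v(ψ))·ψ' = (T⁰¹(ψ) − q̃^(−1/2), T¹¹(ψ) − 1)`. -/
def ProfileSolution (η μ ν q : ℝ) (ψ : ℝ → Fin 2 → ℝ) : Prop :=
  ContDiff ℝ 1 ψ ∧ (∀ t, StateSpace (ψ t)) ∧
  ∀ t, (Bmat η μ ν (vf (ψ t))).mulVec (deriv ψ t) =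
    ![T01 (ψ t) - (Real.sqrt q)⁻¹, T11 (ψ t) - 1]

end


theorem aux_trace_neg (s t u a b c : ℝ) (hs : s < 0) (hB : t ^ 2 < s * u)
    (ha : 0 < a) (hA : b ^ 2 < a * c) : s * a + 2 * t * b + u * c < 0 := by
  have hu : u < 0 := by nlinarith [sq_nonneg t]
  have hc : 0 < c := by nlinarith [sq_nonneg b]
  have h1 : (s*a + u*c)^2 > (2*t*b)^2 := by
    nlinarith [mul_pos (sub_pos.mpr hB) (sub_pos.mpr hA), sq_nonneg (s*a - u*c),
      mul_nonneg (sq_nonneg t) (sq_nonneg b),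
      mul_nonneg (le_of_lt (sub_pos.mpr hB)) (sq_nonneg b)]
  have h2 : s*a + u*c < 0 := by nlinarith
  nlinarith [h1, h2, sq_nonneg (s*a + u*c + 2*t*b)]

theorem aux_disc (s t u a b c : ℝ) (hs : s < 0) (hB : t ^ 2 < s * u)
    (ha : 0 < a) (hA : b ^ 2 < a * c) :
    4 * (s * u - t ^ 2) * (a * c - b ^ 2) ≤ (s * a + 2 * t * b + u * c) ^ 2 := by
  have hc : 0 < c := by nlinarith [sq_nonneg b]
  nlinarith [sq_nonneg (2*a*c*t + b*(s*a + u*c)), mul_pos ha hc,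
    mul_nonneg (sq_nonneg (s*a - u*c)) (le_of_lt (sub_pos.mpr hA))]

theorem aux_aeval_charpoly (M : Matrix (Fin 2) (Fin 2) ℝ) (z : ℂ) :
    Polynomial.aeval z M.charpoly = z ^ 2 - (M.trace : ℂ) * z + (M.det : ℂ) := by
  rw [Matrix.charpoly, Matrix.det_fin_two, Matrix.charmatrix_apply_eq, Matrix.charmatrix_apply_eq,
    Matrix.charmatrix_apply_ne _ _ _ (by decide), Matrix.charmatrix_apply_ne _ _ _ (by decide),
    Matrix.trace_fin_two, Matrix.det_fin_two]
  simp only [map_sub, map_add, _root_.map_mul, map_neg, Polynomial.aeval_X, Polynomial.aeval_C,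
    Complex.coe_algebraMap]
  push_cast
  ring

theorem aux_quad_root (t d : ℝ) (ht : t < 0) (hd : 0 < d) (hdisc : 4 * d ≤ t ^ 2)
    (z : ℂ) (hz : z ^ 2 - (t : ℂ) * z + (d : ℂ) = 0) : z.im = 0 ∧ z.re < 0 := by
  have him : (z ^ 2 - (t : ℂ) * z + (d : ℂ)).im = 0 := by rw [hz]; rfl
  have hre : (z ^ 2 - (t : ℂ) * z + (d : ℂ)).re = 0 := by rw [hz]; rfl
  simp only [Complex.add_im, Complex.sub_im, Complex.mul_im, Complex.ofReal_im,
    Complex.ofReal_re, Complex.add_re, Complex.sub_re, Complex.mul_re, pow_two] at him hre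
  have h1 : (2 * z.re - t) * z.im = 0 := by linarith [him]
  have hy : z.im = 0 := by
    by_contra hy
    have hx : z.re = t / 2 := by
      rcases mul_eq_zero.mp h1 with h | h
      · linarith
      · exact absurd h hy
    rw [hx] at hre
    nlinarith [pow_two_pos_of_ne_zero hy]
  refine ⟨hy, ?_⟩
  rw [hy] at hre
  by_contra hx
  push_neg at hx
  nlinarith

theorem aux_posdef_fin_two (a b d : ℝ) (ha : 0 < a) (hdet : b ^ 2 < a * d) :
    (!![a, b; b, d] : Matrix (Fin 2) (Fin 2) ℝ).PosDef := by
  rw [Matrix.posDef_iff_dotProduct_mulVec]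
  constructor
  · ext i j
    fin_cases i <;> fin_cases j <;> simp [Matrix.conjTranspose_apply]
  · intro x hx
    have hq : star x ⬝ᵥ (!![a, b; b, d] : Matrix (Fin 2) (Fin 2) ℝ) *ᵥ x
        = x 0 * (a * x 0 + b * x 1) + x 1 * (b * x 0 + d * x 1) := by
      simp [dotProduct, Matrix.mulVec, Fin.sum_univ_two, mul_comm]
    rw [hq]
    have hx01 : x 0 ≠ 0 ∨ x 1 ≠ 0 := by
      by_contra h
      push_neg at h
      exact hx (by ext i; fin_cases i <;> simp [h.1, h.2])
    rcases eq_or_ne (x 1) 0 with h1 | h1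
    · have h0 : x 0 ≠ 0 := by tauto
      rw [h1]
      nlinarith [pow_two_pos_of_ne_zero h0]
    · nlinarith [sq_nonneg (a * x 0 + b * x 1),
        mul_pos (sub_pos.mpr hdet) (pow_two_pos_of_ne_zero h1), pow_two_pos_of_ne_zero h1]

set_option maxHeartbeats 2000000 in
theorem aux_main (η μ ν v w e11 e12 e22 a11 a12 a22 : ℝ)
    (hη : 0 < η) (hμ : η ≤ μ) (hν0 : 0 < ν)
    (hw2 : w ^ 2 = 1 + v ^ 2) (hvpos : 0 < v) (hv21 : 1 < v ^ 2)
    (hKv : 9 * η * μ + 2 * η * ν + 4 * μ * ν < v ^ 2 * (4 * μ * ν - 9 * η * μ - η * ν))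
    (he11 : e11 = η * w ^ 2 * v ^ 2 - 16 * μ * w ^ 2 * v ^ 2 - ν * (w ^ 2 + v ^ 2) ^ 2)
    (he12 : e12 = -(η * w ^ 3 * v) + 4 * μ * w * v * (4 * v ^ 2 + 1)
      + 2 * ν * (w ^ 2 + v ^ 2) * w * v)
    (he22 : e22 = η * w ^ 4 - μ * (4 * v ^ 2 + 1) ^ 2 - 4 * ν * w ^ 2 * v ^ 2)
    (ha11 : a11 = v * (6 * w ^ 2 - 1)) (ha12 : a12 = -(w * (6 * v ^ 2 + 1)))
    (ha22 : a22 = v * (6 * v ^ 2 + 3)) :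
    (-(!![e11, e12; e12, e22] : Matrix (Fin 2) (Fin 2) ℝ)).PosDef ∧
    (!![a11, a12; a12, a22] : Matrix (Fin 2) (Fin 2) ℝ).PosDef ∧
    ∀ z : ℂ,
      Polynomial.aeval z ((!![e11, e12; e12, e22] : Matrix (Fin 2) (Fin 2) ℝ)⁻¹
        * !![a11, a12; a12, a22]).charpoly = 0 →
        z.im = 0 ∧ z.re < 0 := by
  -- determinant of B
  have hdetB : e11 * e22 - e12 * e12
      = μ*ν - 4*μ*ν*v^2 + 4*μ*ν*v^4 - η*ν - 2*η*ν*v^2 - η*ν*v^4 - 9*η*μ*v^2 - 9*η*μ*v^4 := by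
    rw [he11, he12, he22]
    linear_combination (μ*ν + μ*ν*w^2 - 5*μ*ν*v^2 - 8*μ*ν*v^2*w^2 + 8*μ*ν*v^4 + 16*μ*ν*v^4*w^2
      - 16*μ*ν*v^6 - η*ν - η*ν*w^2 - η*ν*w^4 - η*ν*w^6 - η*ν*v^2 + η*ν*v^2*w^4
      - 9*η*μ*v^2 - 8*η*μ*v^2*w^2 - 16*η*μ*v^2*w^4 + 16*η*μ*v^4*w^2) * hw2
  have hv20 : (0:ℝ) < v ^ 2 := by positivity
  have hdetBpos : 0 < e11 * e22 - e12 * e12 := by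
    rw [hdetB]
    have hconst : 0 ≤ (μ - η) * ν := mul_nonneg (by linarith) hν0.le
    nlinarith [mul_pos hv20 (sub_pos.mpr hKv)]
  have he11neg : e11 < 0 := by
    rw [he11]
    have hsum : w ^ 2 + v ^ 2 = 1 + 2 * v ^ 2 := by linarith
    rw [hsum]
    have h1 : 0 < ν * (1 + 2 * v ^ 2) ^ 2 := by positivity
    nlinarith [mul_nonneg (sq_nonneg w) (sq_nonneg v)]
  have he22neg : e22 < 0 := by
    by_contra h
    push_neg at h
    nlinarith [mul_nonneg (neg_nonneg.mpr he11neg.le) h, sq_nonneg e12]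
  -- A facts
  have ha11pos : 0 < a11 := by
    rw [ha11]
    nlinarith [sq_nonneg v]
  have hdetA : a11 * a22 - a12 * a12 = 2 * v ^ 2 - 1 := by
    rw [ha11, ha12, ha22]
    linear_combination (6 * v ^ 2 - 1) * hw2
  have hdetApos : 0 < a11 * a22 - a12 * a12 := by rw [hdetA]; linarith
  have ha12sq : a12 ^ 2 < a11 * a22 := by nlinarith
  refine ⟨?_, ?_, ?_⟩
  · -- -B positive definite
    have hneg : (-(!![e11, e12; e12, e22] : Matrix (Fin 2) (Fin 2) ℝ))
        = !![-e11, -e12; -e12, -e22] := by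
      ext i j
      fin_cases i <;> fin_cases j <;> simp
    rw [hneg]
    exact aux_posdef_fin_two _ _ _ (by linarith) (by nlinarith)
  · exact aux_posdef_fin_two _ _ _ ha11pos ha12sq
  · intro z hz
    have he12sq : (-e12) ^ 2 < e22 * e11 := by nlinarith
    have hS : e22 * a11 + 2 * (-e12) * a12 + e11 * a22 < 0 :=
      aux_trace_neg e22 (-e12) e11 a11 a12 a22 he22neg he12sq ha11pos ha12sq
    have hDisc := aux_disc e22 (-e12) e11 a11 a12 a22 he22neg he12sq ha11pos ha12sq
    have hT : ((!![e11, e12; e12, e22] : Matrix (Fin 2) (Fin 2) ℝ)⁻¹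
        * !![a11, a12; a12, a22]).trace
        = (e11 * e22 - e12 * e12)⁻¹ * (e22 * a11 + e11 * a22 - 2 * e12 * a12) := by
      rw [Matrix.inv_def, Matrix.adjugate_fin_two, Matrix.det_fin_two_of, Ring.inverse_eq_inv',
        Matrix.smul_mul, Matrix.trace_smul, Matrix.mul_fin_two, Matrix.trace_fin_two_of]
      simp
      left
      ring
    have hD : ((!![e11, e12; e12, e22] : Matrix (Fin 2) (Fin 2) ℝ)⁻¹
        * !![a11, a12; a12, a22]).det
        = (e11 * e22 - e12 * e12)⁻¹ * (a11 * a22 - a12 * a12) := by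
      rw [Matrix.det_mul, Matrix.det_nonsing_inv, Ring.inverse_eq_inv', Matrix.det_fin_two_of,
        Matrix.det_fin_two_of]
    rw [aux_aeval_charpoly, hT, hD] at hz
    have hinvpos : 0 < (e11 * e22 - e12 * e12)⁻¹ := inv_pos.mpr hdetBpos
    have hdBne : e11 * e22 - e12 * e12 ≠ 0 := ne_of_gt hdetBpos
    refine aux_quad_root _ _ ?_ (mul_pos hinvpos hdetApos) ?_ z hz
    · have : e22 * a11 + e11 * a22 - 2 * e12 * a12 < 0 := by linarith
      exact mul_neg_of_pos_of_neg hinvpos this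
    · have key : 4 * (e11 * e22 - e12 * e12) * (a11 * a22 - a12 * a12)
          ≤ (e22 * a11 + e11 * a22 - 2 * e12 * a12) ^ 2 := by nlinarith
      calc 4 * ((e11 * e22 - e12 * e12)⁻¹ * (a11 * a22 - a12 * a12))
          = ((e11 * e22 - e12 * e12)⁻¹) ^ 2
            * (4 * (e11 * e22 - e12 * e12) * (a11 * a22 - a12 * a12)) := by
            field_simp
        _ ≤ ((e11 * e22 - e12 * e12)⁻¹) ^ 2
            * (e22 * a11 + e11 * a22 - 2 * e12 * a12) ^ 2 := by
            exact mul_le_mul_of_nonneg_left key (sq_nonneg _)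
        _ = ((e11 * e22 - e12 * e12)⁻¹ * (e22 * a11 + e11 * a22 - 2 * e12 * a12)) ^ 2 := by ring

/-- Lemma 2(i): in the strictly causal case, for all `q̃` close enough to `1`,
`B(v₋(q̃))` is negative definite, `A(v₋(q̃))` is positive definite, and all
eigenvalues of `B(v₋)⁻¹ A(v₋)` are real and negative: `ψ₋(q̃)` is an attractor. -/
theorem strictly_causal_upstream_is_attractor (η μ ν : ℝ) (hη : 0 < η) (hμ : η ≤ μ)
    (hν : 9 * η * μ / (4 * μ - η) < ν) :
    ∃ q₀ ∈ Set.Ioo (3 / 4 : ℝ) 1, ∀ q ∈ Set.Ioo q₀ 1,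
      (-(Bmat η μ ν (vminus q))).PosDef ∧ (Amat (vminus q)).PosDef ∧
      ∀ z : ℂ,
        Polynomial.aeval z ((Bmat η μ ν (vminus q))⁻¹ * Amat (vminus q)).charpoly = 0 →
          z.im = 0 ∧ z.re < 0 := by
  have h4mu : 0 < 4 * μ - η := by linarith
  have hμ0 : 0 < μ := lt_of_lt_of_le hη hμ
  have hν0 : 0 < ν := lt_trans (div_pos (by nlinarith [mul_pos hη hμ0]) h4mu) hν
  have hδ : 0 < 4 * μ * ν - 9 * η * μ - η * ν := by
    have h := (div_lt_iff₀ h4mu).mp hν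
    nlinarith
  set Mx := max ((9 * η * μ + 2 * η * ν + 4 * μ * ν) / (4 * μ * ν - 9 * η * μ - η * ν)) 1
    with hMxdef
  have hMx1 : (1 : ℝ) ≤ Mx := le_max_right _ _
  have hMx0 : (0 : ℝ) < Mx := by linarith
  refine ⟨max (7 / 8) (1 - 1 / (8 * (Mx + 1))), ⟨lt_of_lt_of_le (by norm_num) (le_max_left _ _),
    ?_⟩, ?_⟩
  · apply max_lt (by norm_num)
    have : 0 < 1 / (8 * (Mx + 1)) := by positivity
    linarith
  intro q hq
  obtain ⟨hq1, hq2⟩ := hq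
  have hq78 : (7 / 8 : ℝ) < q := lt_of_le_of_lt (le_max_left _ _) hq1
  have hqM : 1 - 1 / (8 * (Mx + 1)) < q := lt_of_le_of_lt (le_max_right _ _) hq1
  have hqden : 0 < 4 * (1 - q) := by linarith
  have hs0 : 0 ≤ q * (4 * q - 3) := by nlinarith
  have hsq := Real.sqrt_nonneg (q * (4 * q - 3))
  have hnum : 0 < 2 * q - 1 + Real.sqrt (q * (4 * q - 3)) := by linarith
  have hrpos : 0 < (2 * q - 1 + Real.sqrt (q * (4 * q - 3))) / (4 * (1 - q)) :=
    div_pos hnum hqden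
  have hv2 : (vminus q) ^ 2 = (2 * q - 1 + Real.sqrt (q * (4 * q - 3))) / (4 * (1 - q)) :=
    Real.sq_sqrt hrpos.le
  have hvpos : 0 < vminus q := Real.sqrt_pos.mpr hrpos
  have hstep : Mx * (4 * (1 - q)) < 1 / 2 := by
    have h1 : Mx * (1 - q) < Mx * (1 / (8 * (Mx + 1))) := by
      apply mul_lt_mul_of_pos_left _ hMx0
      linarith
    have h2 : Mx * (1 / (8 * (Mx + 1))) ≤ 1 / 8 := by
      rw [mul_one_div, div_le_iff₀ (by linarith)]
      linarith
    have h3 : Mx * (4 * (1 - q)) = 4 * (Mx * (1 - q)) := by ring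
    linarith
  have hrM : Mx < (vminus q) ^ 2 := by
    rw [hv2, lt_div_iff₀ hqden]
    linarith
  have hv21 : 1 < (vminus q) ^ 2 := lt_of_le_of_lt hMx1 hrM
  have hKv : 9 * η * μ + 2 * η * ν + 4 * μ * ν
      < (vminus q) ^ 2 * (4 * μ * ν - 9 * η * μ - η * ν) := by
    have h1 : (9 * η * μ + 2 * η * ν + 4 * μ * ν) / (4 * μ * ν - 9 * η * μ - η * ν)
        < (vminus q) ^ 2 := lt_of_le_of_lt (le_max_left _ _) hrM
    exact (div_lt_iff₀ hδ).mp h1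
  have hw2 : (uu (vminus q)) ^ 2 = 1 + (vminus q) ^ 2 := Real.sq_sqrt (by positivity)
  have hB : Bmat η μ ν (vminus q) =
      !![η * (uu (vminus q)) ^ 2 * (vminus q) ^ 2 - 16 * μ * (uu (vminus q)) ^ 2 * (vminus q) ^ 2
          - ν * ((uu (vminus q)) ^ 2 + (vminus q) ^ 2) ^ 2,
        -(η * (uu (vminus q)) ^ 3 * (vminus q))
          + 4 * μ * (uu (vminus q)) * (vminus q) * (4 * (vminus q) ^ 2 + 1)
          + 2 * ν * ((uu (vminus q)) ^ 2 + (vminus q) ^ 2) * (uu (vminus q)) * (vminus q);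
        -(η * (uu (vminus q)) ^ 3 * (vminus q))
          + 4 * μ * (uu (vminus q)) * (vminus q) * (4 * (vminus q) ^ 2 + 1)
          + 2 * ν * ((uu (vminus q)) ^ 2 + (vminus q) ^ 2) * (uu (vminus q)) * (vminus q),
        η * (uu (vminus q)) ^ 4 - μ * (4 * (vminus q) ^ 2 + 1) ^ 2
          - 4 * ν * (uu (vminus q)) ^ 2 * (vminus q) ^ 2] := by
    ext i j
    fin_cases i <;> fin_cases j <;> simp [Bmat, Bvisc, Bther, Bvelo] <;> ring
  have hA : Amat (vminus q) =
      !![(vminus q) * (6 * (uu (vminus q)) ^ 2 - 1), -((uu (vminus q)) * (6 * (vminus q) ^ 2 + 1));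
        -((uu (vminus q)) * (6 * (vminus q) ^ 2 + 1)), (vminus q) * (6 * (vminus q) ^ 2 + 3)] :=
    rfl
  obtain ⟨hc1, hc2, hc3⟩ := aux_main η μ ν (vminus q) (uu (vminus q)) _ _ _ _ _ _
    hη hμ hν0 hw2 hvpos hv21 hKv rfl rfl rfl rfl rfl rfl
  rw [hB, hA]
  exact ⟨hc1, hc2, hc3⟩
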